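/- Let A: X → X* and B: X → X* be continuous, linear, and monotone. Then for every (x,x*) ∈ X×X*, inf_{y*∈X*} ( 𝒞_A(x, x*−y*) + 𝒞_B(x, y*) ) = 𝒞_{A+B}(x,x*), and the infimum is attained. Consequently this partial infimal convolution is the autoconjugate representer 𝒞_{A+B} for A+B. -/

import Mathlib

noncomputable section
open scoped Classical
open Filter Topology

/-- The Fenchel conjugate of `F : X × X* → (-∞,+∞]`, as a function on `X* × X`:
`F*(x*,x) = sup_{(y,y*)} (⟨y,x*⟩ + ⟨x,y*⟩ - F(y,y*))`. -/
def conj2 {X : Type*} [NormedAddCommGroup X] [NormedSpace ℝ X]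
    (F : X × (X →L[ℝ] ℝ) → EReal) : (X →L[ℝ] ℝ) × X → EReal :=
  fun p => ⨆ q : X × (X →L[ℝ] ℝ), ((p.1 q.1 + q.2 p.2 : ℝ) : EReal) - F q

/-- `F` is autoconjugate: `F*(x*,x) = F(x,x*)` for all `(x,x*)`. -/
def Autoconjugate {X : Type*} [NormedAddCommGroup X] [NormedSpace ℝ X]
    (F : X × (X →L[ℝ] ℝ) → EReal) : Prop :=
  ∀ (x : X) (x' : X →L[ℝ] ℝ), conj2 F (x', x) = F (x, x')

/-- `F` is a representer for the set-valued operator `A : X ⇉ X*`: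
`gra A = {(x,x*) : F(x,x*) = ⟨x,x*⟩}`. -/
def IsRepresenter {X : Type*} [NormedAddCommGroup X] [NormedSpace ℝ X]
    (F : X × (X →L[ℝ] ℝ) → EReal) (A : X → Set (X →L[ℝ] ℝ)) : Prop :=
  ∀ (x : X) (x' : X →L[ℝ] ℝ), x' ∈ A x ↔ F (x, x') = ((x' x : ℝ) : EReal)

/-- A set-valued operator `A : X ⇉ X*` is monotone. -/
def MonotoneOp {X : Type*} [NormedAddCommGroup X] [NormedSpace ℝ X]
    (A : X → Set (X →L[ℝ] ℝ)) : Prop :=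
  ∀ ⦃x y : X⦄ ⦃x' y' : X →L[ℝ] ℝ⦄, x' ∈ A x → y' ∈ A y → 0 ≤ (x' - y') (x - y)

/-- A set-valued operator is maximal monotone if it is monotone and admits no proper
monotone extension (in the sense of graph inclusion). -/
def MaximalMonotoneOp {X : Type*} [NormedAddCommGroup X] [NormedSpace ℝ X]
    (A : X → Set (X →L[ℝ] ℝ)) : Prop :=
  MonotoneOp A ∧ ∀ B : X → Set (X →L[ℝ] ℝ), MonotoneOp B → (∀ x, A x ⊆ B x) → B = A

/-- The quadratic function `q_A(x) = ½⟨x,Ax⟩` associated with a continuous linear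
`A : X → X*`. -/
def qF {X : Type*} [NormedAddCommGroup X] [NormedSpace ℝ X]
    (A : X →L[ℝ] X →L[ℝ] ℝ) : X → ℝ :=
  fun x => (1 / 2) * A x x

/-- The Fenchel conjugate of a real-valued function `φ : X → ℝ`, as an `EReal`-valued
function on `X*`: `φ*(x*) = sup_y (⟨y,x*⟩ - φ(y))`. -/
def legendre {X : Type*} [NormedAddCommGroup X] [NormedSpace ℝ X]
    (φ : X → ℝ) : (X →L[ℝ] ℝ) → EReal :=
  fun x' => ⨆ y : X, ((x' y - φ y : ℝ) : EReal)

/-- The symmetric part `A₊ = ½A + ½A*` of a continuous linear `A : X → X*`, where the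
adjoint (restricted to `X`) is `A.flip`. -/
def symPart {X : Type*} [NormedAddCommGroup X] [NormedSpace ℝ X]
    (A : X →L[ℝ] X →L[ℝ] ℝ) : X →L[ℝ] X →L[ℝ] ℝ :=
  (1 / 2 : ℝ) • (A + A.flip)

/-- The antisymmetric part `A∘ = ½A - ½A*` of a continuous linear `A : X → X*`. -/
def antiPart {X : Type*} [NormedAddCommGroup X] [NormedSpace ℝ X]
    (A : X →L[ℝ] X →L[ℝ] ℝ) : X →L[ℝ] X →L[ℝ] ℝ :=
  (1 / 2 : ℝ) • (A - A.flip)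

/-- The Fitzpatrick function of a continuous linear `A : X → X*`:
`F_A(x,x*) = sup_y (⟨x,Ay⟩ + ⟨y,x*⟩ - ⟨y,Ay⟩)`. -/
def fitz {X : Type*} [NormedAddCommGroup X] [NormedSpace ℝ X]
    (A : X →L[ℝ] X →L[ℝ] ℝ) : X × (X →L[ℝ] ℝ) → EReal :=
  fun p => ⨆ y : X, ((A y p.1 + p.2 y - A y y : ℝ) : EReal)

/-- The Ghoussoub autoconjugate function `𝒞_A(x,x*) = q_{A₊}(x) + q_{A₊}*(x* - A∘x)`
associated with a continuous linear monotone `A : X → X*`. -/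
def ghoussoub {X : Type*} [NormedAddCommGroup X] [NormedSpace ℝ X]
    (A : X →L[ℝ] X →L[ℝ] ℝ) : X × (X →L[ℝ] ℝ) → EReal :=
  fun p => ((qF (symPart A) p.1 : ℝ) : EReal) + legendre (qF (symPart A)) (p.2 - antiPart A p.1)

section Aux

variable {X : Type*} [NormedAddCommGroup X] [NormedSpace ℝ X]

lemma coe_le_legendre (φ : X → ℝ) (x' : X →L[ℝ] ℝ) (y : X) :
    ((x' y - φ y : ℝ) : EReal) ≤ legendre φ x' :=
  le_iSup (fun y => ((x' y - φ y : ℝ) : EReal)) y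

lemma legendre_ne_bot (φ : X → ℝ) (x' : X →L[ℝ] ℝ) : legendre φ x' ≠ ⊥ := by
  intro h
  have := coe_le_legendre φ x' 0
  rw [h, le_bot_iff] at this
  exact EReal.coe_ne_bot _ this

lemma legendre_le_coe (φ : X → ℝ) (x' : X →L[ℝ] ℝ) {p : ℝ}
    (h : ∀ y, x' y - φ y ≤ p) : legendre φ x' ≤ (p : EReal) :=
  iSup_le fun y => EReal.coe_le_coe_iff.2 (h y)

lemma forall_le_of_legendre_le {φ : X → ℝ} {x' : X →L[ℝ] ℝ} {p : ℝ}
    (h : legendre φ x' ≤ (p : EReal)) : ∀ y, x' y - φ y ≤ p :=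
  fun y => EReal.coe_le_coe_iff.1 ((coe_le_legendre φ x' y).trans h)

lemma symPart_apply (A : X →L[ℝ] X →L[ℝ] ℝ) (y z : X) :
    symPart A y z = (1 / 2) * (A y z + A z y) := by
  simp [symPart, ContinuousLinearMap.smul_apply, ContinuousLinearMap.add_apply]
  ring

lemma antiPart_apply (A : X →L[ℝ] X →L[ℝ] ℝ) (y z : X) :
    antiPart A y z = (1 / 2) * (A y z - A z y) := by
  simp [antiPart, ContinuousLinearMap.smul_apply, ContinuousLinearMap.sub_apply]

lemma symPart_symm (A : X →L[ℝ] X →L[ℝ] ℝ) (y z : X) :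
    symPart A y z = symPart A z y := by
  rw [symPart_apply, symPart_apply]; ring

lemma antiPart_antisymm (A : X →L[ℝ] X →L[ℝ] ℝ) (y z : X) :
    antiPart A y z = - antiPart A z y := by
  rw [antiPart_apply, antiPart_apply]; ring

lemma symPart_self_apply (A : X →L[ℝ] X →L[ℝ] ℝ) (y : X) :
    symPart A y y = A y y := by
  rw [symPart_apply]; ring

lemma antiPart_self_apply (A : X →L[ℝ] X →L[ℝ] ℝ) (y : X) :
    antiPart A y y = 0 := by
  rw [antiPart_apply]; ring

lemma symPart_add_antiPart_apply (A : X →L[ℝ] X →L[ℝ] ℝ) (y z : X) :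
    symPart A y z + antiPart A y z = A y z := by
  rw [symPart_apply, antiPart_apply]; ring

lemma qF_symPart (A : X →L[ℝ] X →L[ℝ] ℝ) (y : X) :
    qF (symPart A) y = (1 / 2) * A y y := by
  rw [qF, symPart_self_apply]

/-- Expansion of a bilinear form on a difference. -/
lemma bilin_sub_sub (A : X →L[ℝ] X →L[ℝ] ℝ) (y x : X) :
    A (y - x) (y - x) = A y y - A y x - A x y + A x x := by
  simp only [map_sub, ContinuousLinearMap.sub_apply]
  ring

lemma bilin_add_smul (A : X →L[ℝ] X →L[ℝ] ℝ) (x z : X) (t : ℝ) :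
    A (x + t • z) (x + t • z)
      = A x x + t * A x z + t * A z x + t * t * A z z := by
  simp only [map_add, map_smul, ContinuousLinearMap.add_apply,
    ContinuousLinearMap.smul_apply, smul_eq_mul]
  ring

/-- `q*_{A₊}(A₊ x) = q_{A₊}(x)` for monotone `A`. -/
lemma legendre_qF_symPart_self (A : X →L[ℝ] X →L[ℝ] ℝ) (hA : ∀ y, 0 ≤ A y y) (x : X) :
    legendre (qF (symPart A)) (symPart A x) = ((qF (symPart A) x : ℝ) : EReal) := by
  apply le_antisymm
  · apply legendre_le_coe
    intro y
    have h0 : 0 ≤ A (y - x) (y - x) := hA _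
    rw [bilin_sub_sub] at h0
    rw [symPart_apply, qF, symPart_self_apply, qF, symPart_self_apply]
    linarith
  · have h : ((symPart A x) x - qF (symPart A) x : ℝ) = qF (symPart A) x := by
      rw [symPart_self_apply, qF, symPart_self_apply]; ring
    have h2 := coe_le_legendre (qF (symPart A)) (symPart A x) x
    rwa [h] at h2

lemma qF_symPart_convexOn (A : X →L[ℝ] X →L[ℝ] ℝ) (hA : ∀ y, 0 ≤ A y y) :
    ConvexOn ℝ Set.univ (qF (symPart A)) := by
  refine ⟨convex_univ, ?_⟩
  intro a _ b _ lam mu hlam hmu hsum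
  set S := symPart A with hS
  have hpos : 0 ≤ S (a - b) (a - b) := by
    rw [hS, symPart_apply]
    have := hA (a - b); linarith
  rw [bilin_sub_sub] at hpos
  have hsym : S a b = S b a := symPart_symm A a b
  have e : S (lam • a + mu • b) (lam • a + mu • b)
      = lam * lam * S a a + lam * mu * S a b + mu * lam * S b a + mu * mu * S b b := by
    simp only [map_add, map_smul, ContinuousLinearMap.add_apply,
      ContinuousLinearMap.smul_apply, smul_eq_mul]
    ring
  simp only [qF, smul_eq_mul]
  rw [e]
  have hmu' : mu = 1 - lam := by linarith
  subst hmu'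
  nlinarith [mul_nonneg (mul_nonneg hlam hmu) hpos]

lemma qF_symPart_continuous (A : X →L[ℝ] X →L[ℝ] ℝ) :
    Continuous (qF (symPart A)) := by
  have : Continuous fun y : X => (symPart A) y y :=
    Continuous.clm_apply (symPart A).continuous continuous_id
  exact (continuous_const.mul this : Continuous fun y : X => (1 / 2 : ℝ) * (symPart A) y y)

/-- Hahn–Banach sandwich: if `w y - f y - p ≤ g y` pointwise with `f, g` convex and
`g` continuous, there is a continuous affine function `v + c` between them. -/
lemma sandwich (f g : X → ℝ) (hf : ConvexOn ℝ Set.univ f) (hg : ConvexOn ℝ Set.univ g)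
    (hgc : Continuous g) (w : X →L[ℝ] ℝ) (p : ℝ)
    (h : ∀ y, w y - f y - g y ≤ p) :
    ∃ (v : X →L[ℝ] ℝ) (c : ℝ), (∀ y, v y - g y ≤ -c) ∧ (∀ y, (w - v) y - f y ≤ p + c) := by
  classical
  set s : Set (X × ℝ) := {q | g q.1 < q.2} with hs_def
  set t : Set (X × ℝ) := {q | q.2 ≤ w q.1 - f q.1 - p} with ht_def
  have hs_open : IsOpen s := isOpen_lt (hgc.comp continuous_fst) continuous_snd
  have hs_conv : Convex ℝ s := by
    intro q1 hq1 q2 hq2 lam mu hlam hmu hsum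
    simp only [hs_def, Set.mem_setOf_eq] at hq1 hq2 ⊢
    have hkey := hg.2 (Set.mem_univ q1.1) (Set.mem_univ q2.1) hlam hmu hsum
    simp only [smul_eq_mul, Prod.fst_add, Prod.snd_add, Prod.smul_fst, Prod.smul_snd] at *
    rcases lt_or_ge 0 lam with h0 | h0
    · have h1 : lam * g q1.1 < lam * q1.2 := by nlinarith
      have h2 : mu * g q2.1 ≤ mu * q2.2 := by nlinarith
      linarith
    · have hlam0 : lam = 0 := le_antisymm h0 hlam
      have hmu1 : mu = 1 := by linarith
      subst hlam0; subst hmu1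
      simpa using hq2
  have ht_conv : Convex ℝ t := by
    intro q1 hq1 q2 hq2 lam mu hlam hmu hsum
    simp only [ht_def, Set.mem_setOf_eq] at hq1 hq2 ⊢
    have hkey := hf.2 (Set.mem_univ q1.1) (Set.mem_univ q2.1) hlam hmu hsum
    simp only [smul_eq_mul, Prod.fst_add, Prod.snd_add, Prod.smul_fst, Prod.smul_snd] at *
    have hw : w (lam • q1.1 + mu • q2.1) = lam * w q1.1 + mu * w q2.1 := by
      simp [map_add, map_smul]
    rw [hw]
    have h1 : lam * q1.2 ≤ lam * (w q1.1 - f q1.1 - p) :=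
      mul_le_mul_of_nonneg_left hq1 hlam
    have h2 : mu * q2.2 ≤ mu * (w q2.1 - f q2.1 - p) :=
      mul_le_mul_of_nonneg_left hq2 hmu
    have hp : lam * p + mu * p = p := by rw [← add_mul, hsum, one_mul]
    nlinarith [h1, h2, hkey, hp]
  have hdisj : Disjoint s t := by
    rw [Set.disjoint_left]
    intro q hqs hqt
    simp only [hs_def, ht_def, Set.mem_setOf_eq] at hqs hqt
    have := h q.1
    linarith
  obtain ⟨φ, u, hφs, hφt⟩ := geometric_hahn_banach_open hs_conv hs_open ht_conv hdisj
  set β : ℝ := φ (0, 1) with hβ_def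
  have hdecomp : ∀ (y : X) (r : ℝ), φ (y, r) = φ (y, 0) + r * β := by
    intro y r
    have e : (y, r) = (y, (0 : ℝ)) + r • ((0 : X), (1 : ℝ)) := by
      simp [Prod.ext_iff]
    rw [e, map_add, map_smul, smul_eq_mul, hβ_def]
  have hmem_s : ∀ (y : X) (ε : ℝ), 0 < ε → ((y, g y + ε) : X × ℝ) ∈ s := by
    intro y ε hε
    simp only [hs_def, Set.mem_setOf_eq]
    linarith
  have hmem_t : ∀ y : X, ((y, w y - f y - p) : X × ℝ) ∈ t := by
    intro y
    simp only [ht_def, Set.mem_setOf_eq]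
    exact le_refl _
  have hβ_nonpos : β ≤ 0 := by
    by_contra hb
    push_neg at hb
    set r : ℝ := max (g 0 + 1) ((u - φ (0, 0)) / β + 1) with hr_def
    have hr1 : g 0 < r := by
      have := le_max_left (g 0 + 1) ((u - φ (0, 0)) / β + 1)
      linarith
    have hmem : ((0 : X), r) ∈ s := by
      simp only [hs_def, Set.mem_setOf_eq]; exact hr1
    have hlt := hφs _ hmem
    rw [hdecomp 0 r] at hlt
    have hr2 : (u - φ (0, 0)) / β + 1 ≤ r := le_max_right _ _
    have : u - φ (0, 0) ≤ (r - 1) * β := by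
      rw [div_add' _ _ _ (ne_of_gt hb)] at hr2
      calc u - φ (0, 0) = ((u - φ (0, 0)) / β) * β := by field_simp
        _ ≤ (r - 1) * β := by
            apply mul_le_mul_of_nonneg_right _ hb.le
            rw [div_le_iff₀ hb] at hr2 ⊢
            nlinarith [hr2]
    nlinarith
  have hβ_ne : β ≠ 0 := by
    intro hb
    have h1 := hφs _ (hmem_s 0 1 one_pos)
    have h2 := hφt _ (hmem_t 0)
    rw [hdecomp 0 (g 0 + 1), hb] at h1
    rw [hdecomp 0 (w 0 - f 0 - p), hb] at h2
    simp at h1 h2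
    linarith
  have hβ : β < 0 := lt_of_le_of_ne hβ_nonpos hβ_ne
  have key1 : ∀ y : X, φ (y, 0) + β * g y ≤ u := by
    intro y
    by_contra h'
    push_neg at h'
    set δ : ℝ := φ (y, 0) + β * g y - u with hδ_def
    have hδ : 0 < δ := by linarith
    set ε : ℝ := δ / (2 * (-β)) with hε_def
    have hε : 0 < ε := div_pos hδ (by linarith)
    have hlt := hφs _ (hmem_s y ε hε)
    rw [hdecomp] at hlt
    have hεβ : ε * β = -δ / 2 := by
      rw [hε_def]; field_simp
    nlinarith
  have key2 : ∀ y : X, u ≤ φ (y, 0) + β * (w y - f y - p) := by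
    intro y
    have := hφt _ (hmem_t y)
    rw [hdecomp] at this
    linarith [this]
  set ψ : X →L[ℝ] ℝ := φ.comp (ContinuousLinearMap.inl ℝ X ℝ) with hψ_def
  have hψ : ∀ y : X, ψ y = φ (y, 0) := fun y => rfl
  refine ⟨(-β⁻¹) • ψ, u / β, ?_, ?_⟩
  · intro y
    have h1 := key1 y
    have hβipos : 0 < -β⁻¹ := by
      rw [neg_pos]
      exact inv_lt_zero.mpr hβ
    simp only [ContinuousLinearMap.smul_apply, smul_eq_mul, hψ y]
    have hmul := mul_le_mul_of_nonneg_left h1 hβipos.le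
    have e : -β⁻¹ * (φ (y, 0) + β * g y) = -β⁻¹ * φ (y, 0) - g y := by
      field_simp
      ring
    rw [e] at hmul
    have hu : -(u / β) = -β⁻¹ * u := by rw [div_eq_mul_inv]; ring
    rw [hu]
    linarith [hmul]
  · intro y
    have h2 := key2 y
    have hβipos : 0 < -β⁻¹ := by
      rw [neg_pos]; exact inv_lt_zero.mpr hβ
    simp only [ContinuousLinearMap.sub_apply, ContinuousLinearMap.smul_apply,
      smul_eq_mul, hψ y]
    have hmul := mul_le_mul_of_nonneg_left h2 hβipos.le
    have e : -β⁻¹ * (φ (y, 0) + β * (w y - f y - p))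
        = -β⁻¹ * φ (y, 0) - (w y - f y - p) := by
      field_simp
      ring
    rw [e] at hmul
    have hu : u / β = -(-β⁻¹ * u) := by rw [div_eq_mul_inv]; ring
    rw [hu]
    linarith [hmul]

/-- Weak direction of the infimal convolution. -/
lemma legendre_add_le (f g : X → ℝ) (u v : X →L[ℝ] ℝ) :
    legendre (fun y => f y + g y) (u + v) ≤ legendre f u + legendre g v := by
  refine iSup_le fun y => ?_
  have e : ((u + v) y - (f y + g y) : ℝ) = (u y - f y) + (v y - g y) := by
    simp [ContinuousLinearMap.add_apply]; ring
  rw [e, EReal.coe_add]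
  exact add_le_add (coe_le_legendre f u y) (coe_le_legendre g v y)

/-- Exactness of the infimal convolution of conjugates of continuous convex functions. -/
lemma legendre_exact (f g : X → ℝ) (hf : ConvexOn ℝ Set.univ f) (hg : ConvexOn ℝ Set.univ g)
    (hgc : Continuous g) (w : X →L[ℝ] ℝ) :
    ∃ v : X →L[ℝ] ℝ,
      legendre f (w - v) + legendre g v ≤ legendre (fun y => f y + g y) w := by
  by_cases htop : legendre (fun y => f y + g y) w = ⊤
  · exact ⟨0, htop ▸ le_top⟩
  · have hbot : legendre (fun y => f y + g y) w ≠ ⊥ := legendre_ne_bot _ _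
    set p : ℝ := (legendre (fun y => f y + g y) w).toReal with hp_def
    have hcoe : (p : EReal) = legendre (fun y => f y + g y) w :=
      EReal.coe_toReal htop hbot
    have hp : ∀ y, w y - (f y + g y) ≤ p :=
      forall_le_of_legendre_le (le_of_eq hcoe.symm)
    obtain ⟨v, c, h1, h2⟩ := sandwich f g hf hg hgc w p (fun y => by linarith [hp y])
    refine ⟨v, ?_⟩
    calc legendre f (w - v) + legendre g v
        ≤ ((p + c : ℝ) : EReal) + ((-c : ℝ) : EReal) :=
          add_le_add (legendre_le_coe _ _ h2) (legendre_le_coe _ _ h1)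
      _ = (p : EReal) := by rw [← EReal.coe_add]; norm_num
      _ = legendre (fun y => f y + g y) w := hcoe

/-- Autoconjugacy of the Ghoussoub function of a monotone linear operator. -/
lemma ghoussoub_autoconjugate (C : X →L[ℝ] X →L[ℝ] ℝ) (hC : ∀ y, 0 ≤ C y y) :
    Autoconjugate (ghoussoub C) := by
  intro x x'
  set S := symPart C with hS_def
  set N := antiPart C with hN_def
  set f : X → ℝ := qF S with hf_def
  have hfx_half : ∀ y, f y = (1 / 2) * S y y := fun y => rfl
  have hG : ∀ q : X × (X →L[ℝ] ℝ),
      ghoussoub C q = ((f q.1 : ℝ) : EReal) + legendre f (q.2 - N q.1) := fun q => rfl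
  apply le_antisymm
  · refine iSup_le fun q => ?_
    obtain ⟨y, y'⟩ := q
    rw [hG (y, y'), hG (x, x')]
    by_cases hL : legendre f (y' - N y) = ⊤
    · rw [hL, EReal.coe_add_top, EReal.sub_top]
      exact bot_le
    · have hLbot : legendre f (y' - N y) ≠ ⊥ := legendre_ne_bot _ _
      set l : ℝ := (legendre f (y' - N y)).toReal with hl_def
      have hlcoe : (l : EReal) = legendre f (y' - N y) := EReal.coe_toReal hL hLbot
      have hFY : ∀ z, (y' - N y) z - f z ≤ l :=
        forall_le_of_legendre_le (le_of_eq hlcoe.symm)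
      have hFYx := hFY x
      rw [← hlcoe, ← EReal.coe_add, ← EReal.coe_sub]
      have hreal : x' y + y' x - (f y + l) ≤ f x + ((x' - N x) y - f y) := by
        have hanti : N y x = - N x y := antiPart_antisymm C y x
        simp only [ContinuousLinearMap.sub_apply] at hFYx ⊢
        linarith
      calc ((x' y + y' x - (f y + l) : ℝ) : EReal)
          ≤ ((f x + ((x' - N x) y - f y) : ℝ) : EReal) := EReal.coe_le_coe_iff.2 hreal
        _ = ((f x : ℝ) : EReal) + (((x' - N x) y - f y : ℝ) : EReal) := EReal.coe_add _ _
        _ ≤ ((f x : ℝ) : EReal) + legendre f (x' - N x) :=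
            add_le_add le_rfl (coe_le_legendre f (x' - N x) y)
  · -- key claim: each z gives a lower bound for the conjugate
    have claim : ∀ z : X, ((f x + ((x' - N x) z - f z) : ℝ) : EReal)
        ≤ conj2 (ghoussoub C) (x', x) := by
      intro z
      have hterm := le_iSup
        (fun q : X × (X →L[ℝ] ℝ) => ((x' q.1 + q.2 x : ℝ) : EReal) - ghoussoub C q)
        ((z, S x + N z) : X × (X →L[ℝ] ℝ))
      refine le_trans (le_of_eq ?_) hterm
      have hsx : (S x + N z) - N z = S x := add_sub_cancel_right _ _
      have hleg : legendre f ((S x + N z) - N z) = ((f x : ℝ) : EReal) := by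
        rw [hsx, hf_def, hS_def]
        exact legendre_qF_symPart_self C hC x
      rw [hG (z, S x + N z)]
      simp only
      rw [hleg, ← EReal.coe_add, ← EReal.coe_sub]
      congr 1
      have hanti : N z x = - N x z := antiPart_antisymm C z x
      have hsxx : S x x = 2 * f x := by rw [hfx_half]; ring
      simp only [ContinuousLinearMap.add_apply, ContinuousLinearMap.sub_apply]
      linarith
    by_contra hcon
    push_neg at hcon
    set T := conj2 (ghoussoub C) (x', x) with hT_def
    have hTbot : T ≠ ⊥ := by
      intro hb
      have := claim 0
      rw [hb, le_bot_iff] at this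
      exact EReal.coe_ne_bot _ this
    have hTtop : T ≠ ⊤ := by
      intro ht
      rw [hG (x, x'), ht] at hcon
      exact (not_top_lt (lt_of_le_of_lt le_top hcon)).elim
    set tR : ℝ := T.toReal with htR_def
    have htcoe : (tR : EReal) = T := EReal.coe_toReal hTtop hTbot
    have hub : ∀ z, (x' - N x) z - f z ≤ tR - f x := by
      intro z
      have := (claim z).trans (le_of_eq htcoe.symm)
      have := EReal.coe_le_coe_iff.1 this
      linarith
    have hle : legendre f (x' - N x) ≤ ((tR - f x : ℝ) : EReal) :=
      legendre_le_coe _ _ hub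
    have : ghoussoub C (x, x') ≤ T := by
      rw [hG (x, x'), ← htcoe]
      calc ((f x : ℝ) : EReal) + legendre f (x' - N x)
          ≤ ((f x : ℝ) : EReal) + ((tR - f x : ℝ) : EReal) := add_le_add le_rfl hle
        _ = ((tR : ℝ) : EReal) := by rw [← EReal.coe_add]; norm_num
    exact absurd (lt_of_le_of_lt this hcon) (lt_irrefl _)

set_option maxHeartbeats 1000000 in
/-- The Ghoussoub function represents the (graph of the) operator. -/
lemma ghoussoub_isRepresenter (C : X →L[ℝ] X →L[ℝ] ℝ) (hC : ∀ y, 0 ≤ C y y) :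
    IsRepresenter (ghoussoub C) (fun x => {x' | x' = C x}) := by
  intro x x'
  set S := symPart C with hS_def
  set N := antiPart C with hN_def
  set f : X → ℝ := qF S with hf_def
  have hG : ghoussoub C (x, x') = ((f x : ℝ) : EReal) + legendre f (x' - N x) := rfl
  constructor
  · intro hx'
    simp only [Set.mem_setOf_eq] at hx'
    subst hx'
    rw [hG]
    have hCx : (C x : X →L[ℝ] ℝ) - N x = S x := by
      ext z
      simp only [ContinuousLinearMap.sub_apply]
      have := symPart_add_antiPart_apply C x z
      rw [hS_def, hN_def]
      linarith
    rw [hCx, hf_def, hS_def, legendre_qF_symPart_self C hC x, ← EReal.coe_add]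
    have h1 : qF (symPart C) x + qF (symPart C) x = C x x := by
      rw [qF_symPart]; ring
    rw [h1]
  · intro hEq
    simp only [Set.mem_setOf_eq]
    rw [hG] at hEq
    have hLbot : legendre f (x' - N x) ≠ ⊥ := legendre_ne_bot _ _
    have hLtop : legendre f (x' - N x) ≠ ⊤ := by
      intro ht
      rw [ht, EReal.coe_add_top] at hEq
      exact EReal.coe_ne_top _ hEq.symm
    set l : ℝ := (legendre f (x' - N x)).toReal with hl_def
    have hlcoe : (l : EReal) = legendre f (x' - N x) := EReal.coe_toReal hLtop hLbot
    rw [← hlcoe, ← EReal.coe_add, EReal.coe_eq_coe_iff] at hEq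
    have hFY : ∀ y, (x' - N x) y - f y ≤ l :=
      forall_le_of_legendre_le (le_of_eq hlcoe.symm)
    -- deduce x' = C x
    have hfnonneg : ∀ z : X, 0 ≤ f z := by
      intro z
      rw [hf_def, qF_symPart]
      linarith [hC z]
    have key : ∀ z : X, x' z - N x z - S x z ≤ 0 := by
      intro z
      have hquad : ∀ t : ℝ, 0 < t → x' z - N x z - S x z ≤ t * f z := by
        intro t ht
        have h := hFY (x + t • z)
        have hNxx : N x x = 0 := antiPart_self_apply C x
        have hsym : S x z = S z x := symPart_symm C x z
        have hfexp : f (x + t • z) = f x + t * S x z + t * t * f z := by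
          simp only [hf_def, qF]
          rw [bilin_add_smul]
          linear_combination (-(t / 2)) * hsym
        have hlin : (x' - N x) (x + t • z)
            = (x' x - N x x) + t * (x' z - N x z) := by
          simp only [ContinuousLinearMap.sub_apply, map_add, map_smul, smul_eq_mul]
        rw [hlin, hfexp, hNxx] at h
        have hl : l = x' x - f x := by linarith [hEq]
        have ht2 : t * (x' z - N x z - S x z) ≤ t * (t * f z) := by nlinarith
        exact le_of_mul_le_mul_left ht2 ht
      by_contra hpos
      push_neg at hpos
      set r : ℝ := x' z - N x z - S x z with hr_def
      have hfz := hfnonneg z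
      have ht : 0 < r / (2 * (f z + 1)) := by positivity
      have := hquad _ ht
      rw [div_mul_eq_mul_div, le_div_iff₀ (by positivity)] at this
      nlinarith
    have keyEq : ∀ z : X, x' z - N x z - S x z = 0 := by
      intro z
      have h1 := key z
      have h2 := key (-z)
      simp only [map_neg] at h2
      linarith
    ext z
    have := keyEq z
    have hsum := symPart_add_antiPart_apply C x z
    rw [hS_def, hN_def] at this
    simp only [hS_def, hN_def] at *
    linarith

end Aux

/-- Proposition 2.8. For `A, B : X → X*` continuous, linear and
monotone, the partial infimal convolution of `𝒞_A` and `𝒞_B` equals `𝒞_{A+B}` with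
attained infimum, so it is the autoconjugate representer `𝒞_{A+B}` for `A + B`. -/
theorem stmt7 {X : Type*} [NormedAddCommGroup X] [NormedSpace ℝ X] [CompleteSpace X]
    (hrefl : Function.Surjective (NormedSpace.inclusionInDoubleDual ℝ X))
    (A B : X →L[ℝ] X →L[ℝ] ℝ)
    (hmonoA : ∀ x : X, 0 ≤ A x x) (hmonoB : ∀ x : X, 0 ≤ B x x) :
    (∀ (x : X) (x' : X →L[ℝ] ℝ),
      (⨅ y' : X →L[ℝ] ℝ, ghoussoub A (x, x' - y') + ghoussoub B (x, y'))
        = ghoussoub (A + B) (x, x') ∧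
      ∃ y' : X →L[ℝ] ℝ,
        ghoussoub (A + B) (x, x') = ghoussoub A (x, x' - y') + ghoussoub B (x, y')) ∧
    Autoconjugate (ghoussoub (A + B)) ∧
    IsRepresenter (ghoussoub (A + B)) (fun x => {x' | x' = (A + B) x}) := by
  have hmonoAB : ∀ x : X, 0 ≤ (A + B) x x := by
    intro x
    simp only [ContinuousLinearMap.add_apply]
    exact add_nonneg (hmonoA x) (hmonoB x)
  -- notation
  set fA : X → ℝ := qF (symPart A) with hfA_def
  set fB : X → ℝ := qF (symPart B) with hfB_def
  have hqadd : qF (symPart (A + B)) = fun y => fA y + fB y := by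
    funext y
    rw [hfA_def, hfB_def, qF_symPart, qF_symPart, qF_symPart]
    simp only [ContinuousLinearMap.add_apply]
    ring
  have hNadd : ∀ x : X, antiPart (A + B) x = antiPart A x + antiPart B x := by
    intro x
    ext z
    simp only [ContinuousLinearMap.add_apply]
    rw [antiPart_apply, antiPart_apply, antiPart_apply]
    simp only [ContinuousLinearMap.add_apply]
    ring
  have hGAB : ∀ (x : X) (x' : X →L[ℝ] ℝ),
      ghoussoub (A + B) (x, x')
        = ((fA x + fB x : ℝ) : EReal)
          + legendre (fun y => fA y + fB y) (x' - antiPart A x - antiPart B x) := by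
    intro x x'
    show ((qF (symPart (A + B)) x : ℝ) : EReal)
        + legendre (qF (symPart (A + B))) (x' - antiPart (A + B) x) = _
    rw [hqadd, hNadd x, sub_add_eq_sub_sub]
  have hGA : ∀ (x : X) (u : X →L[ℝ] ℝ),
      ghoussoub A (x, u) = ((fA x : ℝ) : EReal) + legendre fA (u - antiPart A x) :=
    fun x u => rfl
  have hGB : ∀ (x : X) (u : X →L[ℝ] ℝ),
      ghoussoub B (x, u) = ((fB x : ℝ) : EReal) + legendre fB (u - antiPart B x) :=
    fun x u => rfl
  refine ⟨?_, ghoussoub_autoconjugate (A + B) hmonoAB,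
    ghoussoub_isRepresenter (A + B) hmonoAB⟩
  intro x x'
  set w : X →L[ℝ] ℝ := x' - antiPart A x - antiPart B x with hw_def
  -- the lower bound, valid for every y'
  have hge : ∀ y' : X →L[ℝ] ℝ,
      ghoussoub (A + B) (x, x') ≤ ghoussoub A (x, x' - y') + ghoussoub B (x, y') := by
    intro y'
    rw [hGAB x x', hGA x (x' - y'), hGB x y']
    set u : X →L[ℝ] ℝ := (x' - y') - antiPart A x with hu_def
    set v : X →L[ℝ] ℝ := y' - antiPart B x with hv_def
    have huv : u + v = w := by rw [hu_def, hv_def, hw_def]; abel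
    have hweak : legendre (fun y => fA y + fB y) w ≤ legendre fA u + legendre fB v := by
      rw [← huv]
      exact legendre_add_le fA fB u v
    calc ((fA x + fB x : ℝ) : EReal) + legendre (fun y => fA y + fB y) w
        ≤ ((fA x + fB x : ℝ) : EReal) + (legendre fA u + legendre fB v) :=
          add_le_add le_rfl hweak
      _ = (((fA x : ℝ) : EReal) + ((fB x : ℝ) : EReal))
            + (legendre fA u + legendre fB v) := by rw [EReal.coe_add]
      _ = (((fA x : ℝ) : EReal) + legendre fA u)
            + (((fB x : ℝ) : EReal) + legendre fB v) := by
          abel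
  -- exactness: a particular y' achieving the value
  obtain ⟨v, hv⟩ := legendre_exact fA fB
    (qF_symPart_convexOn A hmonoA) (qF_symPart_convexOn B hmonoB)
    (qF_symPart_continuous B) w
  set y'₀ : X →L[ℝ] ℝ := v + antiPart B x with hy'_def
  have hsub1 : y'₀ - antiPart B x = v := add_sub_cancel_right _ _
  have hsub2 : (x' - y'₀) - antiPart A x = w - v := by
    rw [hy'_def, hw_def]; abel
  have hle : ghoussoub A (x, x' - y'₀) + ghoussoub B (x, y'₀)
      ≤ ghoussoub (A + B) (x, x') := by
    rw [hGAB x x', hGA x (x' - y'₀), hGB x y'₀, hsub1, hsub2]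
    calc (((fA x : ℝ) : EReal) + legendre fA (w - v))
          + (((fB x : ℝ) : EReal) + legendre fB v)
        = (((fA x : ℝ) : EReal) + ((fB x : ℝ) : EReal))
            + (legendre fA (w - v) + legendre fB v) := by abel
      _ ≤ (((fA x : ℝ) : EReal) + ((fB x : ℝ) : EReal))
            + legendre (fun y => fA y + fB y) w := add_le_add le_rfl hv
      _ = ((fA x + fB x : ℝ) : EReal) + legendre (fun y => fA y + fB y) w := by
          rw [EReal.coe_add]
  constructor
  · refine le_antisymm (iInf_le_of_le y'₀ hle) (le_iInf hge)
  · exact ⟨y'₀, le_antisymm (hge y'₀) hle⟩
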